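/- Let A, O, D be points in the Euclidean plane with O the origin, |A| = |D| = 1, and angle AOD = π/6. Let γ : [0,1] → 4·Δ(AOD) be a curve with γ(0) = A, γ(1) = D whose interior points lie in the interior of the dilated triangle 4·Δ(AOD). Set R_j = {x ∈ 4·Δ(AOD) : 4·2^{-j} ≤ |x| ≤ 8·2^{-j}} and Φ_j = {φ_{γ(t)} : γ(t) ∈ R_j}, where φ_x ∈ [0, π/6] is the angular polar coordinate of x. Then there exists j₀ ∈ ℕ with H¹(Φ_{j₀}) ≥ 2^{-j₀}·π/6, where H¹ is the 1-dimensional Hausdorff measure. -/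

import Mathlib

open Set Real MeasureTheory

/-- `A, O = 0, D` in the plane with `|A| = |D| = 1` and angle `AOD = π/6`.
For a curve `γ` from `A` to `D` whose interior points lie in the interior of the dilated
triangle `4·Δ(AOD)`, setting `R_j = {x ∈ 4·Δ(AOD) : 4·2^{-j} ≤ |x| ≤ 8·2^{-j}}` and
`Φ_j = {φ_x : x = γ(t) ∈ R_j}` (where `φ_x ∈ [0, π/6]` is the polar angle of `x`,
i.e. the angle between `x` and `A`), there is `j₀ ∈ ℕ` with
`H¹(Φ_{j₀}) ≥ 2^{-j₀}·π/6`. -/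
theorem stmt5 (A D : EuclideanSpace ℝ (Fin 2)) (hA : ‖A‖ = 1) (hD : ‖D‖ = 1)
    (hAD : InnerProductGeometry.angle A D = π / 6)
    (γ : ℝ → EuclideanSpace ℝ (Fin 2)) (hγ : ContinuousOn γ (Icc 0 1))
    (h0 : γ 0 = A) (h1 : γ 1 = D)
    (hint : ∀ t ∈ Ioo (0:ℝ) 1,
      γ t ∈ interior (convexHull ℝ {0, (4:ℝ) • A, (4:ℝ) • D})) :
    ∃ j₀ : ℕ,
      ENNReal.ofReal ((2:ℝ) ^ (-(j₀:ℤ)) * (π / 6)) ≤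
        μH[1] {θ : ℝ | ∃ t ∈ Icc (0:ℝ) 1,
          (γ t ∈ convexHull ℝ {0, (4:ℝ) • A, (4:ℝ) • D} ∧
            ‖γ t‖ ∈ Icc ((4:ℝ) * 2 ^ (-(j₀:ℤ))) ((8:ℝ) * 2 ^ (-(j₀:ℤ)))) ∧
          θ = InnerProductGeometry.angle A (γ t)} := by
  by_contra hcon
  push_neg at hcon
  set T : Set (EuclideanSpace ℝ (Fin 2)) := convexHull ℝ {0, (4:ℝ) • A, (4:ℝ) • D} with hT
  have hA0 : A ≠ 0 := by intro h; rw [h] at hA; simp at hA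
  have hD0 : D ≠ 0 := by intro h; rw [h] at hD; simp at hD
  have hpi : (0:ℝ) < π := Real.pi_pos
  have hinnerAD : (inner ℝ A D : ℝ) = Real.sqrt 3 / 2 := by
    have h := InnerProductGeometry.cos_angle_mul_norm_mul_norm A D
    rw [hAD, hA, hD, Real.cos_pi_div_six] at h
    simpa using h.symm
  have hs3 : (0:ℝ) ≤ Real.sqrt 3 := Real.sqrt_nonneg 3
  have hDA : (inner ℝ D A : ℝ) = Real.sqrt 3 / 2 := by rw [real_inner_comm]; exact hinnerAD
  -- vertices in T
  have hv0 : (0:EuclideanSpace ℝ (Fin 2)) ∈ T := subset_convexHull ℝ _ (by simp)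
  have hvA : ((4:ℝ) • A : EuclideanSpace ℝ (Fin 2)) ∈ T := subset_convexHull ℝ _ (by simp)
  have hvD : ((4:ℝ) • D : EuclideanSpace ℝ (Fin 2)) ∈ T := subset_convexHull ℝ _ (by simp)
  have hAinT : A ∈ T := by
    have := (convex_convexHull ℝ _) hv0 hvA (by norm_num : (0:ℝ) ≤ 3/4)
      (by norm_num : (0:ℝ) ≤ 1/4) (by norm_num)
    simpa [smul_smul] using this
  have hDinT : D ∈ T := by
    have := (convex_convexHull ℝ _) hv0 hvD (by norm_num : (0:ℝ) ≤ 3/4)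
      (by norm_num : (0:ℝ) ≤ 1/4) (by norm_num)
    simpa [smul_smul] using this
  -- half space
  have hhalf : T ⊆ {x : EuclideanSpace ℝ (Fin 2) | 0 ≤ (inner ℝ (A + D) x : ℝ)} := by
    apply convexHull_min
    · rintro x hx
      simp only [Set.mem_insert_iff, Set.mem_singleton_iff] at hx
      rcases hx with rfl | rfl | rfl
      · simp
      · show (0:ℝ) ≤ (inner ℝ (A + D) ((4:ℝ) • A) : ℝ)
        rw [real_inner_smul_right, inner_add_left, real_inner_self_eq_norm_sq, hA,
          hDA]
        nlinarith
      · show (0:ℝ) ≤ (inner ℝ (A + D) ((4:ℝ) • D) : ℝ)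
        rw [real_inner_smul_right, inner_add_left, real_inner_self_eq_norm_sq, hD,
          hinnerAD]
        nlinarith
    · intro x hx y hy a b ha hb hab
      simp only [mem_setOf_eq] at *
      rw [inner_add_right, real_inner_smul_right, real_inner_smul_right]
      have := mul_nonneg ha hx
      have := mul_nonneg hb hy
      linarith
  have hADne : (A + D : EuclideanSpace ℝ (Fin 2)) ≠ 0 := by
    intro h
    have h2 : (inner ℝ (A + D) (A + D) : ℝ) = 0 := by rw [h]; simp
    rw [inner_add_add_self, real_inner_self_eq_norm_sq, real_inner_self_eq_norm_sq,
      hA, hD, hinnerAD, hDA] at h2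
    nlinarith
  have hADpos : (0:ℝ) < ‖(A + D : EuclideanSpace ℝ (Fin 2))‖ := norm_pos_iff.2 hADne
  have h0ni : (0:EuclideanSpace ℝ (Fin 2)) ∉ interior T := by
    intro h
    rw [mem_interior_iff_mem_nhds, Metric.mem_nhds_iff] at h
    obtain ⟨ε, hε, hball⟩ := h
    set y : EuclideanSpace ℝ (Fin 2) := (-(ε/2) / ‖(A + D : EuclideanSpace ℝ (Fin 2))‖) • (A + D) with hy
    have hymem : y ∈ Metric.ball (0:EuclideanSpace ℝ (Fin 2)) ε := by
      rw [Metric.mem_ball, dist_zero_right, hy, norm_smul]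
      rw [Real.norm_eq_abs, abs_div, abs_neg, abs_of_pos (by linarith : (0:ℝ) < ε/2),
        abs_of_pos hADpos, div_mul_cancel₀ _ (ne_of_gt hADpos)]
      linarith
    have hge := hhalf (hball hymem)
    simp only [mem_setOf_eq, hy, real_inner_smul_right,
      real_inner_self_eq_norm_sq] at hge
    have heq : -(ε/2) / ‖(A + D : EuclideanSpace ℝ (Fin 2))‖ * ‖(A + D : EuclideanSpace ℝ (Fin 2))‖^2
        = -(ε/2) * ‖(A + D : EuclideanSpace ℝ (Fin 2))‖ := by
      field_simp
    rw [heq] at hge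
    nlinarith [mul_pos (half_pos hε) hADpos]
  -- T in closed ball
  have hTb : T ⊆ Metric.closedBall (0:EuclideanSpace ℝ (Fin 2)) 4 := by
    apply convexHull_min
    · rintro x hx
      simp only [Set.mem_insert_iff, Set.mem_singleton_iff] at hx
      rcases hx with rfl | rfl | rfl <;>
        simp [Metric.mem_closedBall, dist_zero_right, norm_smul, hA, hD]
    · exact convex_closedBall _ _
  have hne : ∀ t ∈ Icc (0:ℝ) 1, γ t ≠ 0 := by
    intro t ht
    rcases eq_or_lt_of_le ht.1 with h | hl
    · rw [← h, h0]; exact hA0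
    rcases eq_or_lt_of_le ht.2 with h | hr
    · rw [h, h1]; exact hD0
    · intro hz
      exact h0ni (hz ▸ hint t ⟨hl, hr⟩)
  have hlt4 : ∀ t ∈ Icc (0:ℝ) 1, ‖γ t‖ < 4 := by
    intro t ht
    rcases eq_or_lt_of_le ht.1 with h | hl
    · rw [← h, h0, hA]; norm_num
    rcases eq_or_lt_of_le ht.2 with h | hr
    · rw [h, h1, hD]; norm_num
    · have := interior_mono hTb (hint t ⟨hl, hr⟩)
      rw [interior_closedBall _ (by norm_num : (4:ℝ) ≠ 0)] at this
      simpa [Metric.mem_ball, dist_zero_right] using this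
  have hmemT : ∀ t ∈ Icc (0:ℝ) 1, γ t ∈ T := by
    intro t ht
    rcases eq_or_lt_of_le ht.1 with h | hl
    · rw [← h, h0]; exact hAinT
    rcases eq_or_lt_of_le ht.2 with h | hr
    · rw [h, h1]; exact hDinT
    · exact interior_subset (hint t ⟨hl, hr⟩)
  -- continuity of angle along curve
  have hf : ContinuousOn (fun t => InnerProductGeometry.angle A (γ t)) (Icc 0 1) := by
    intro t ht
    have hpair : ContinuousWithinAt (fun s => (A, γ s)) (Icc (0:ℝ) 1) t :=
      ContinuousWithinAt.prodMk continuousWithinAt_const (hγ t ht)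
    have hc := ContinuousAt.comp_continuousWithinAt
      (g := fun y : EuclideanSpace ℝ (Fin 2) × EuclideanSpace ℝ (Fin 2) =>
        InnerProductGeometry.angle y.1 y.2)
      (f := fun s : ℝ => (A, γ s))
      (InnerProductGeometry.continuousAt_angle (x := (A, γ t)) hA0 (hne t ht)) hpair
    exact hc
  have hIVT : Icc (0:ℝ) (π/6) ⊆ (fun t => InnerProductGeometry.angle A (γ t)) '' Icc 0 1 := by
    have := intermediate_value_Icc (by norm_num : (0:ℝ) ≤ 1) hf
    simpa [h0, h1, InnerProductGeometry.angle_self hA0, hAD] using this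
  set S : ℕ → Set ℝ := fun j => {θ : ℝ | ∃ t ∈ Icc (0:ℝ) 1,
      (γ t ∈ T ∧ ‖γ t‖ ∈ Icc ((4:ℝ) * 2 ^ (-(j:ℤ))) ((8:ℝ) * 2 ^ (-(j:ℤ)))) ∧
      θ = InnerProductGeometry.angle A (γ t)} with hS
  have hcov : Icc (0:ℝ) (π/6) ⊆ ⋃ j : ℕ, S (j+1) := by
    intro θ hθ
    obtain ⟨t, ht, hft⟩ := hIVT hθ
    have hr0 : (0:ℝ) < ‖γ t‖ := norm_pos_iff.2 (hne t ht)
    have hr4 : ‖γ t‖ < 4 := hlt4 t ht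
    obtain ⟨n, hn1, hn2⟩ := exists_mem_Ico_zpow (x := ‖γ t‖/4) (y := (2:ℝ))
      (by positivity) one_lt_two
    have hnneg : n < 0 := by
      by_contra hn
      push_neg at hn
      have : (1:ℝ) ≤ (2:ℝ)^n := one_le_zpow₀ one_le_two hn
      linarith
    refine mem_iUnion.2 ⟨(-n-1).toNat, ?_⟩
    have hjc : (((-n-1).toNat : ℕ) : ℤ) = -n - 1 := Int.toNat_of_nonneg (by omega)
    have hexp : -((((-n-1).toNat + 1 : ℕ)) : ℤ) = n := by push_cast [hjc]; ring
    refine ⟨t, ht, ⟨⟨hmemT t ht, ?_, ?_⟩, hft.symm⟩⟩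
    · rw [hexp]
      linarith [hn1, (by linarith : (4:ℝ) * (‖γ t‖/4) = ‖γ t‖)]
    · rw [hexp]
      have : (2:ℝ)^(n+1) = 2 * 2^n := by
        rw [zpow_add_one₀ (by norm_num : (2:ℝ) ≠ 0)]; ring
      nlinarith [hn2]
  have hmeas : ENNReal.ofReal (π/6) ≤ ∑' j : ℕ, μH[1] (S (j+1)) := by
    calc ENNReal.ofReal (π/6) = μH[1] (Icc (0:ℝ) (π/6)) := by
          rw [MeasureTheory.hausdorffMeasure_real, Real.volume_Icc]; norm_num
      _ ≤ μH[1] (⋃ j : ℕ, S (j+1)) := measure_mono hcov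
      _ ≤ ∑' j : ℕ, μH[1] (S (j+1)) := measure_iUnion_le _
  set g : ℕ → ENNReal := fun j => ENNReal.ofReal ((2:ℝ) ^ (-(((j+1:ℕ)):ℤ)) * (π / 6)) with hg
  have hgval : ∀ j : ℕ, g j = ENNReal.ofReal (π/6) * (2⁻¹ : ENNReal) ^ (j+1) := by
    intro j
    simp only [hg]
    have h1' : (2:ℝ) ^ (-(((j+1:ℕ)):ℤ)) = ((2:ℝ)⁻¹) ^ (j+1) := by
      rw [zpow_neg, zpow_natCast, inv_pow]
    rw [h1', mul_comm, ENNReal.ofReal_mul (by positivity), ENNReal.ofReal_pow (by norm_num)]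
    congr 1
    rw [ENNReal.ofReal_inv_of_pos (by norm_num), ENNReal.ofReal_ofNat]
  have hgsum : ∑' j : ℕ, g j = ENNReal.ofReal (π/6) := by
    simp_rw [hgval]
    rw [ENNReal.tsum_mul_left, ENNReal.tsum_geometric_add_one, ENNReal.one_sub_inv_two]
    rw [inv_inv]
    norm_num [ENNReal.inv_mul_cancel]
  have hle : ∀ j : ℕ, μH[1] (S (j+1)) ≤ g j := fun j => (hcon (j+1)).le
  have hfi : (∑' j : ℕ, μH[1] (S (j+1))) ≠ ⊤ := by
    refine ne_top_of_le_ne_top ?_ (ENNReal.tsum_le_tsum hle)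
    rw [hgsum]; exact ENNReal.ofReal_ne_top
  have hlt : (∑' j : ℕ, μH[1] (S (j+1))) < ∑' j : ℕ, g j :=
    ENNReal.tsum_lt_tsum hfi hle (hcon 1)
  rw [hgsum] at hlt
  exact absurd (lt_of_le_of_lt hmeas hlt) (lt_irrefl _)
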